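/- Let s ∈ (1/2,1), λ₁ > 0, λ₂ ∈ ℝ with 0 < |λ₂| < c(λ₁) := 2s·(λ₁/(2s−1))^((2s−1)/(2s)). Using the principal branch of z ↦ z^{2s} on ℂ∖(−∞,0], define λ̃(z) = (λ₁ + z^{2s})² − λ₂²z². Then λ̃ has no multiple zeros: for every z₀ ∈ ℂ∖(−∞,0] with λ̃(z₀) = 0, one has λ̃′(z₀) ≠ 0. -/

import Mathlib

open Real Set Complex

/-- For `s ∈ (1/2,1)`, `λ₁ > 0` and `0 < |λ₂| < c(λ₁)`, the analytic function
`λ̃(z) = (λ₁ + z^{2s})² - λ₂² z²` (principal branch of the power on the slit plane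
`ℂ ∖ (-∞,0]`) has no multiple zeros: at any zero `z₀` in the slit plane, `λ̃′(z₀) ≠ 0`. -/
theorem tilde_lambda_no_multiple_zeros (s lam1 lam2 : ℝ)
    (hs : s ∈ Set.Ioo (1/2 : ℝ) 1) (hlam1 : 0 < lam1)
    (hlam2pos : 0 < |lam2|)
    (hlam2 : |lam2| < 2*s*(lam1/(2*s-1))^((2*s-1)/(2*s))) :
    ∀ z₀ ∈ Complex.slitPlane,
      ((lam1 : ℂ) + z₀ ^ (2*s : ℂ))^2 - (lam2:ℂ)^2 * z₀^2 = 0 →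
      deriv (fun z : ℂ => ((lam1 : ℂ) + z ^ (2*s : ℂ))^2 - (lam2:ℂ)^2 * z^2) z₀ ≠ 0 := by
  obtain ⟨hs1, hs2⟩ := hs
  intro z₀ hz₀ h0 hcontra
  have hz0 : z₀ ≠ 0 := Complex.slitPlane_ne_zero hz₀
  have h2s1 : (0:ℝ) < 2*s - 1 := by linarith
  have h2s : (0:ℝ) < 2*s := by linarith
  have hlam2ne : lam2 ≠ 0 := by
    intro h; rw [h, abs_zero] at hlam2pos; exact lt_irrefl 0 hlam2pos
  set X : ℂ := z₀ ^ (2*s : ℂ) with hXdef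
  set Y : ℂ := z₀ ^ ((2*s : ℂ) - 1) with hYdef
  -- the derivative
  have hd1 : HasDerivAt (fun z : ℂ => ((lam1 : ℂ) + z ^ (2*s : ℂ))^2)
      ((2:ℂ) * ((lam1:ℂ) + X)^1 * ((2*s:ℂ) * Y)) z₀ :=
    (((Complex.hasStrictDerivAt_cpow_const hz₀).hasDerivAt).const_add (lam1:ℂ)).pow 2
  have hd2 : HasDerivAt (fun z : ℂ => (lam2:ℂ)^2 * z^2)
      ((lam2:ℂ)^2 * ((2:ℂ) * z₀^1)) z₀ := (hasDerivAt_pow 2 z₀).const_mul _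
  have hder : deriv (fun z : ℂ => ((lam1 : ℂ) + z ^ (2*s : ℂ))^2 - (lam2:ℂ)^2 * z^2) z₀ = _ :=
    (hd1.sub hd2).deriv
  rw [hcontra] at hder
  have hder0 : (2:ℂ) * ((lam1:ℂ) + X)^1 * ((2*s:ℂ) * Y) - (lam2:ℂ)^2 * ((2:ℂ) * z₀^1) = 0 :=
    hder.symm
  -- Y * z₀ = X
  have hXY : Y * z₀ = X := by
    rw [hXdef, hYdef]
    have h := (Complex.cpow_add ((2*s:ℂ)-1) 1 hz0).symm
    simp only [Complex.cpow_one] at h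
    rw [h, sub_add_cancel]
  -- factor the zero condition
  obtain ⟨b, hbabs, hEq⟩ : ∃ b : ℝ, |b| = |lam2| ∧ (lam1:ℂ) + X = (b:ℂ) * z₀ := by
    have hfac : (((lam1:ℂ) + X) - (lam2:ℂ)*z₀) * (((lam1:ℂ) + X) + (lam2:ℂ)*z₀) = 0 := by
      linear_combination h0
    rcases mul_eq_zero.mp hfac with h | h
    · exact ⟨lam2, rfl, by linear_combination h⟩
    · exact ⟨-lam2, abs_neg lam2, by push_cast; linear_combination h⟩
  have hbne : b ≠ 0 := by
    intro h; rw [h, abs_zero] at hbabs; exact hlam2ne (abs_eq_zero.mp hbabs.symm)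
  have hbc : ((b:ℝ):ℂ) ≠ 0 := by exact_mod_cast hbne
  have hb2 : b^2 = lam2^2 := by rw [← _root_.sq_abs, hbabs, _root_.sq_abs]
  have hb2c : ((b:ℝ):ℂ)^2 = ((lam2:ℝ):ℂ)^2 := by exact_mod_cast congrArg (Complex.ofReal ·) hb2
  -- key: c * X = b * z₀
  have hkey : (2*s:ℂ) * X = (b:ℂ) * z₀ := by
    have h2bz : ((2:ℂ) * (b:ℂ) * z₀) ≠ 0 := by
      apply mul_ne_zero (mul_ne_zero two_ne_zero hbc) hz0
    apply mul_left_cancel₀ h2bz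
    rw [hEq] at hder0
    linear_combination z₀ * hder0 - 4*(b:ℂ)*(s:ℂ)*z₀*hXY - 2*z₀^2*hb2c
  -- lam1 = (2s - 1) X
  have hl1 : (lam1:ℂ) = ((2*s:ℂ) - 1) * X := by linear_combination hEq - hkey
  set A : ℝ := lam1/(2*s-1) with hAdef
  have hApos : 0 < A := div_pos hlam1 h2s1
  have h2s1c : ((2*s-1:ℝ):ℂ) ≠ 0 := by exact_mod_cast ne_of_gt h2s1
  have hXA : X = ((A:ℝ):ℂ) := by
    apply mul_left_cancel₀ h2s1c
    have hAe : (2*s-1) * A = lam1 := by rw [hAdef]; field_simp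
    have hAeC : ((2*s-1:ℝ):ℂ) * ((A:ℝ):ℂ) = ((lam1:ℝ):ℂ) := by
      exact_mod_cast congrArg (Complex.ofReal ·) hAe
    push_cast at hAeC ⊢
    linear_combination -hl1 - hAeC
  rw [hXA] at hkey
  -- z₀ is real
  set r : ℝ := 2*s*A/b with hrdef
  have hz₀r : z₀ = ((r:ℝ):ℂ) := by
    rw [hrdef]
    push_cast
    rw [eq_div_iff hbc]
    linear_combination -hkey
  have hrpos : 0 < r := by
    rw [Complex.mem_slitPlane_iff, hz₀r] at hz₀
    simpa using hz₀
  have hrne : r ≠ 0 := ne_of_gt hrpos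
  have hbr : b * r = 2*s*A := by
    rw [hrdef]; field_simp
  have habs_r : |lam2| * r = 2*s*A := by
    have hbpos : 0 < b := by
      rcases lt_trichotomy b 0 with h | h | h
      · exfalso
        nlinarith [mul_pos (neg_pos.mpr h) hrpos, mul_pos h2s hApos]
      · exact absurd h hbne
      · exact h
    rw [← hbabs, abs_of_pos hbpos]; exact hbr
  -- r ^ (2s) = A
  have hrA : r ^ (2*s) = A := by
    have h1 : ((r ^ (2*s) : ℝ) : ℂ) = (r:ℂ) ^ ((2*s:ℝ):ℂ) := Complex.ofReal_cpow hrpos.le (2*s)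
    have h2 : ((2*s:ℝ):ℂ) = (2*s:ℂ) := by push_cast; ring
    rw [h2, ← hz₀r, ← hXdef, hXA] at h1
    exact_mod_cast h1
  have hr_eq : r = A ^ (1/(2*s)) := by
    rw [← hrA, ← Real.rpow_mul hrpos.le, show (2*s)*(1/(2*s)) = 1 by field_simp, Real.rpow_one]
  have hfinal : A ^ ((2*s-1)/(2*s)) * r = A := by
    rw [hr_eq, ← Real.rpow_add hApos,
      show (2*s-1)/(2*s) + 1/(2*s) = 1 by field_simp; ring, Real.rpow_one]
  have heq : |lam2| = 2*s*(A ^ ((2*s-1)/(2*s))) := by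
    apply mul_right_cancel₀ hrne
    rw [mul_assoc, hfinal]; exact habs_r
  rw [heq] at hlam2
  exact lt_irrefl _ hlam2
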